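/- arXiv:2108.08361 — 2 statements merged into one kernel-verified Lean document; each statement's English description precedes it below -/
import Mathlib

section
/- Let E ∈ C, d ≥ 2, and y_1,...,y_n ∈ R^d. Then the space of functions of the form Φ(x) = Σ_{finite} z_m exp(ζ_m·x), with ζ_m·ζ_m = -E, satisfying Φ(y_j) = 0 for all j = 1,...,n, is infinite-dimensional; each such Φ solves -ΔΦ = EΦ on R^d and vanishes at every point y_j. -/
open Complex

/-- The Laplacian of `f : ℝ^d → ℂ`, as the sum of the second partial derivatives
along the standard coordinate directions. -/
noncomputable def laplacian {d : ℕ} (f : EuclideanSpace ℝ (Fin d) → ℂ)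
    (x : EuclideanSpace ℝ (Fin d)) : ℂ :=
  ∑ i : Fin d,
    fderiv ℝ (fun z => fderiv ℝ f z (EuclideanSpace.single i (1 : ℝ))) x
      (EuclideanSpace.single i (1 : ℝ))

namespace ExpHelm

variable {d : ℕ}

/-- The linear functional `x ↦ ∑ i, ζ i * x i`. -/
noncomputable def Lmap (ζ : Fin d → ℂ) : EuclideanSpace ℝ (Fin d) →L[ℝ] ℂ :=
  ∑ i, ζ i • (Complex.ofRealCLM.comp (EuclideanSpace.proj i))

lemma Lmap_apply (ζ : Fin d → ℂ) (x : EuclideanSpace ℝ (Fin d)) :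
    Lmap ζ x = ∑ i, ζ i * (x i : ℂ) := by
  simp [Lmap]

lemma Lmap_single (ζ : Fin d → ℂ) (i : Fin d) (ε : ℝ) :
    Lmap ζ (EuclideanSpace.single i ε) = ζ i * ε := by
  simp [Lmap_apply, EuclideanSpace.single_apply]
  rw [Finset.sum_eq_single i] <;> simp +contextual [eq_comm]

/-- sums of exponentials with coefficients -/
noncomputable def F (s : Finset (Fin d → ℂ)) (c : (Fin d → ℂ) → ℂ)
    (x : EuclideanSpace ℝ (Fin d)) : ℂ :=
  ∑ ζ ∈ s, c ζ * Complex.exp (Lmap ζ x)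

lemma hasFDerivAt_F (s : Finset (Fin d → ℂ)) (c : (Fin d → ℂ) → ℂ)
    (x : EuclideanSpace ℝ (Fin d)) :
    HasFDerivAt (F s c) (∑ ζ ∈ s, c ζ • (Complex.exp (Lmap ζ x) • (Lmap ζ))) x := by
  exact HasFDerivAt.fun_sum fun ζ _ => ((Lmap ζ).hasFDerivAt.cexp).const_mul (c ζ)

lemma fderiv_F (s : Finset (Fin d → ℂ)) (c : (Fin d → ℂ) → ℂ)
    (x : EuclideanSpace ℝ (Fin d)) (i : Fin d) :
    fderiv ℝ (F s c) x (EuclideanSpace.single i 1) = F s (fun ζ => c ζ * ζ i) x := by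
  rw [(hasFDerivAt_F s c x).fderiv]
  simp [F, Lmap_single, smul_eq_mul]
  exact Finset.sum_congr rfl fun ζ _ => by ring


lemma F_eq_raw (s : Finset (Fin d → ℂ)) (c : (Fin d → ℂ) → ℂ) :
    (fun x : EuclideanSpace ℝ (Fin d) => ∑ ζ ∈ s, c ζ * Complex.exp (∑ i, ζ i * (x i : ℂ)))
      = F s c := by
  funext x
  simp [F, Lmap_apply]

lemma laplacian_F {E : ℂ} (s : Finset (Fin d → ℂ)) (c : (Fin d → ℂ) → ℂ)
    (hs : ∀ ζ ∈ s, ∑ i, ζ i * ζ i = -E) (x : EuclideanSpace ℝ (Fin d)) :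
    laplacian (F s c) x = -E * F s c x := by
  have h1 : ∀ i : Fin d, (fun z => fderiv ℝ (F s c) z (EuclideanSpace.single i (1:ℝ)))
      = F s (fun ζ => c ζ * ζ i) := fun i => funext fun z => fderiv_F s c z i
  unfold laplacian
  calc ∑ i : Fin d, fderiv ℝ (fun z => fderiv ℝ (F s c) z (EuclideanSpace.single i (1:ℝ))) x
        (EuclideanSpace.single i (1:ℝ))
      = ∑ i : Fin d, F s (fun ζ => c ζ * ζ i * ζ i) x := by
        refine Finset.sum_congr rfl fun i _ => ?_
        rw [h1 i, fderiv_F]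
    _ = ∑ ζ ∈ s, (∑ i : Fin d, c ζ * ζ i * ζ i) * Complex.exp (Lmap ζ x) := by
        unfold F
        rw [Finset.sum_comm]
        exact Finset.sum_congr rfl fun ζ _ => by rw [Finset.sum_mul]
    _ = -E * F s c x := by
        unfold F
        rw [Finset.mul_sum]
        refine Finset.sum_congr rfl fun ζ hζ => ?_
        have : (∑ i : Fin d, c ζ * ζ i * ζ i) = c ζ * -E := by
          rw [← hs ζ hζ, Finset.mul_sum]
          exact Finset.sum_congr rfl fun i _ => by ring
        rw [this]; ring


noncomputable def zeta (E : ℂ) (t : ℂ) : Fin d → ℂ := fun i =>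
  if (i : ℕ) = 0 then (t - E / t) / 2
  else if (i : ℕ) = 1 then -(I * (t + E / t)) / 2 else 0

lemma zeta_sum {E t : ℂ} (hd : 2 ≤ d) (ht : t ≠ 0) :
    ∑ i : Fin d, zeta E t i * zeta E t i = -E := by
  have hd0 : 0 < d := by omega
  have hd1 : 1 < d := by omega
  set i0 : Fin d := ⟨0, hd0⟩ with hi0
  set i1 : Fin d := ⟨1, hd1⟩ with hi1
  have hne : i0 ≠ i1 := by simp [hi0, hi1, Fin.ext_iff]
  have h0 : ∑ i : Fin d, zeta E t i * zeta E t i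
      = ∑ i ∈ ({i0, i1} : Finset (Fin d)), zeta E t i * zeta E t i := by
    refine (Finset.sum_subset (Finset.subset_univ _) fun i _ hi => ?_).symm
    simp only [Finset.mem_insert, Finset.mem_singleton, not_or] at hi
    have h0' : (i : ℕ) ≠ 0 := by simpa [hi0, Fin.ext_iff] using hi.1
    have h1' : (i : ℕ) ≠ 1 := by simpa [hi1, Fin.ext_iff] using hi.2
    simp [zeta, h0', h1']
  rw [h0, Finset.sum_pair hne]
  simp only [zeta, hi0, hi1]
  norm_num
  field_simp
  ring_nf
  linear_combination (t^2 + E)^2 * Complex.I_sq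

lemma zeta_recover {E t : ℂ} (hd : 2 ≤ d) (ht : t ≠ 0) :
    zeta (d := d) E t ⟨0, by omega⟩ + I * zeta E t (⟨1, by omega⟩ : Fin d) = t := by
  simp only [zeta]
  norm_num
  field_simp
  ring_nf
  linear_combination (-t^2 - E) * Complex.I_sq


noncomputable def char (ζ : Fin d → ℂ) : Multiplicative (EuclideanSpace ℝ (Fin d)) →* ℂ where
  toFun := fun x => Complex.exp (Lmap ζ x.toAdd)
  map_one' := by simp
  map_mul' := fun a b => by
    show Complex.exp (Lmap ζ (a * b).toAdd) = _
    rw [toAdd_mul, map_add, Complex.exp_add]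

lemma exp_lin_inj {c c' : ℂ} (h : ∀ ε : ℝ, Complex.exp (c * ε) = Complex.exp (c' * ε)) :
    c = c' := by
  have h1 : HasDerivAt (fun y : ℂ => Complex.exp (c * y))
      (Complex.exp (c * ((0 : ℝ) : ℂ)) * (c * 1)) ((0 : ℝ) : ℂ) :=
    ((hasDerivAt_id _).const_mul c).cexp
  have h2 : HasDerivAt (fun y : ℂ => Complex.exp (c' * y))
      (Complex.exp (c' * ((0 : ℝ) : ℂ)) * (c' * 1)) ((0 : ℝ) : ℂ) :=
    ((hasDerivAt_id _).const_mul c').cexp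
  have h1' := h1.comp_ofReal
  have h2' := h2.comp_ofReal
  have hf : (fun ε : ℝ => Complex.exp (c * ε)) = fun ε : ℝ => Complex.exp (c' * ε) := funext h
  rw [hf] at h1'
  simpa using h1'.unique h2'

lemma char_inj : Function.Injective (char (d := d)) := by
  intro ζ ζ' h
  funext i
  apply exp_lin_inj (c := ζ i) (c' := ζ' i)
  intro ε
  have hx := DFunLike.congr_fun h (Multiplicative.ofAdd (EuclideanSpace.single i ε))
  simpa [char, Lmap_single] using hx

lemma linearIndependent_exp (E : ℂ) (hd : 2 ≤ d) :
    LinearIndependent ℂ (fun k : ℕ =>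
      (fun x : EuclideanSpace ℝ (Fin d) => Complex.exp (Lmap (zeta E ((k : ℂ) + 1)) x))) := by
  have hne : ∀ k : ℕ, ((k : ℂ) + 1) ≠ 0 := by
    intro k
    have : (((k + 1 : ℕ) : ℂ)) ≠ 0 := Nat.cast_ne_zero.2 (Nat.succ_ne_zero k)
    simpa using this
  have hzinj : Function.Injective (fun k : ℕ => zeta (d := d) E ((k : ℂ) + 1)) := by
    intro k k' hkk
    simp only at hkk
    have h3 : ((k : ℂ) + 1) = ((k' : ℂ) + 1) := by
      rw [← zeta_recover (E := E) hd (hne k), ← zeta_recover (E := E) hd (hne k'), hkk]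
    have h4 : (k : ℂ) = (k' : ℂ) := by
      exact add_right_cancel h3
    exact_mod_cast h4
  have hinj : Function.Injective (fun k : ℕ => char (d := d) (zeta E ((k : ℂ) + 1))) :=
    fun k k' h => hzinj (congrArg (fun ζ => ζ) (char_inj h))
  have H := (linearIndependent_monoidHom (Multiplicative (EuclideanSpace ℝ (Fin d))) ℂ).comp
    (fun k : ℕ => char (zeta E ((k : ℂ) + 1))) hinj
  exact H

noncomputable def V (d : ℕ) (E : ℂ) : Submodule ℂ (EuclideanSpace ℝ (Fin d) → ℂ) where
  carrier := {Φ | ∃ (s : Finset (Fin d → ℂ)) (z : (Fin d → ℂ) → ℂ),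
    (∀ ζ ∈ s, ∑ i, ζ i * ζ i = -E) ∧
    Φ = fun x => ∑ ζ ∈ s, z ζ * Complex.exp (∑ i, ζ i * (x i : ℂ))}
  zero_mem' := ⟨∅, 0, by simp, by funext x; simp⟩
  add_mem' := by
    classical
    rintro Φ Ψ ⟨s, z, hs, rfl⟩ ⟨s', z', hs', rfl⟩
    refine ⟨s ∪ s', fun ζ => (if ζ ∈ s then z ζ else 0) + (if ζ ∈ s' then z' ζ else 0), ?_, ?_⟩
    · intro ζ hζ
      rcases Finset.mem_union.1 hζ with h | h
      exacts [hs ζ h, hs' ζ h]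
    · funext x
      simp [add_mul, Finset.sum_add_distrib, ite_mul, Finset.sum_ite_mem,
        Finset.union_inter_cancel_left, Finset.union_inter_cancel_right]
  smul_mem' := by
    rintro c Φ ⟨s, z, hs, rfl⟩
    exact ⟨s, fun ζ => c * z ζ, hs, by funext x; simp [Finset.mul_sum, mul_assoc]⟩

noncomputable def ev (n : ℕ) (y : Fin n → EuclideanSpace ℝ (Fin d)) :
    (EuclideanSpace ℝ (Fin d) → ℂ) →ₗ[ℂ] (Fin n → ℂ) where
  toFun := fun Φ j => Φ (y j)
  map_add' := fun _ _ => rfl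
  map_smul' := fun _ _ => rfl

end ExpHelm

set_option synthInstance.maxHeartbeats 1000000 in
set_option maxHeartbeats 2000000 in
/-- For every `E ∈ ℂ`, `d ≥ 2` and points `y 1, …, y n ∈ ℝ^d`, the space of finite
linear combinations of exponentials `exp(ζ·x)` with `ζ·ζ = -E` vanishing at every
`y j` is infinite-dimensional, and each of its members solves `-ΔΦ = EΦ`. -/
theorem exp_helmholtz_solutions_vanishing_infinite_dimensional
    (d : ℕ) (hd : 2 ≤ d) (E : ℂ) (n : ℕ) (y : Fin n → EuclideanSpace ℝ (Fin d)) :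
    ∃ U : Submodule ℂ (EuclideanSpace ℝ (Fin d) → ℂ),
      (∀ Φ : EuclideanSpace ℝ (Fin d) → ℂ, Φ ∈ U ↔
        (∃ (s : Finset (Fin d → ℂ)) (z : (Fin d → ℂ) → ℂ),
          (∀ ζ ∈ s, ∑ i, ζ i * ζ i = -E) ∧
          Φ = fun x => ∑ ζ ∈ s, z ζ * Complex.exp (∑ i, ζ i * (x i : ℂ))) ∧
        ∀ j : Fin n, Φ (y j) = 0) ∧
      ¬ Module.Finite ℂ ↥U ∧
      ∀ Φ ∈ U, (∀ x, -(laplacian Φ x) = E * Φ x) ∧ ∀ j : Fin n, Φ (y j) = 0 := by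
  classical
  set W := ExpHelm.V d E with hWdef
  set K := LinearMap.ker (ExpHelm.ev (d := d) n y) with hKdef
  refine ⟨W ⊓ K, ?_, ?_, ?_⟩
  · intro Φ
    rw [Submodule.mem_inf]
    constructor
    · rintro ⟨h1, h2⟩
      exact ⟨h1, fun j => congrFun (LinearMap.mem_ker.1 h2) j⟩
    · rintro ⟨h1, h2⟩
      exact ⟨h1, LinearMap.mem_ker.2 (funext h2)⟩
  · intro hfin
    set A := (ExpHelm.ev (d := d) n y).domRestrict W with hAdef
    have hker : LinearMap.ker A = Submodule.comap W.subtype (W ⊓ K) := by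
      ext x
      simp only [LinearMap.mem_ker, hAdef, LinearMap.domRestrict_apply, Submodule.mem_comap,
        Submodule.subtype_apply, Submodule.mem_inf]
      exact ⟨fun h => ⟨x.2, LinearMap.mem_ker.2 h⟩, fun h => LinearMap.mem_ker.1 h.2⟩
    have e := Submodule.comapSubtypeEquivOfLe (inf_le_left : W ⊓ K ≤ W)
    rw [← hker] at e
    have hkfin : Module.Finite ℂ (LinearMap.ker A) := Module.Finite.equiv e.symm
    have hrank1 := Module.rank_lt_aleph0 ℂ (↥(LinearMap.ker A))
    have hrank2 : Module.rank ℂ (LinearMap.range A) < Cardinal.aleph0 :=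
      lt_of_le_of_lt (Submodule.rank_le _) (Module.rank_lt_aleph0 ℂ (Fin n → ℂ))
    have hsum := LinearMap.rank_range_add_rank_ker A
    have hWrank : Module.rank ℂ W < Cardinal.aleph0 := by
      rw [← hsum]
      exact Cardinal.add_lt_aleph0 hrank2 hrank1
    have hne : ∀ k : ℕ, ((k : ℂ) + 1) ≠ 0 := by
      intro k
      have : (((k + 1 : ℕ) : ℂ)) ≠ 0 := Nat.cast_ne_zero.2 (Nat.succ_ne_zero k)
      simpa using this
    have hfam : ∀ k : ℕ,
        (fun x => Complex.exp (ExpHelm.Lmap (ExpHelm.zeta E ((k : ℂ) + 1)) x)) ∈ W := by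
      intro k
      refine ⟨{ExpHelm.zeta E ((k : ℂ) + 1)}, fun _ => 1, ?_, ?_⟩
      · intro ζ hζ
        rw [Finset.mem_singleton] at hζ
        subst hζ
        exact ExpHelm.zeta_sum hd (hne k)
      · funext x
        simp [ExpHelm.Lmap_apply]
    have hLI := ExpHelm.linearIndependent_exp (d := d) E hd
    have hLI' : LinearIndependent ℂ (fun k : ℕ => (⟨_, hfam k⟩ : W)) :=
      LinearIndependent.of_comp W.subtype hLI
    exact absurd hLI'.aleph0_le_rank (not_le.2 hWrank)
  · rintro Φ ⟨hΦW, hΦK⟩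
    refine ⟨?_, fun j => congrFun (LinearMap.mem_ker.1 hΦK) j⟩
    obtain ⟨s, z, hs, rfl⟩ := hΦW
    intro x
    rw [ExpHelm.F_eq_raw s z, ExpHelm.laplacian_F s z hs x]
    ring
end

section
/- Let d ≥ 2, r > 0, and let y, y' be distinct points in R^d. Then the functions θ ↦ exp(i r θ·y) and θ ↦ exp(i r θ·y') on the unit sphere S^{d-1} are linearly independent in L^2(S^{d-1}). More generally, for pairwise distinct y_1,...,y_n ∈ R^d, the functions θ ↦ exp(i r θ·y_j), j=1,...,n, are linearly independent in L^2(S^{d-1}). -/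
open MeasureTheory Complex Metric Set
open scoped Pointwise

lemma aux_toSphere_pos (d : ℕ) (hd : 1 ≤ d) :
    ((volume : Measure (EuclideanSpace ℝ (Fin d))).toSphere).IsOpenPosMeasure := by
  constructor
  intro U hU hne
  rw [Measure.toSphere_apply' _ hU.measurableSet]
  obtain ⟨V, hV, hVU⟩ := isOpen_induced_iff.1 hU
  have himg : (Subtype.val '' U : Set (EuclideanSpace ℝ (Fin d)))
      = V ∩ sphere 0 1 := by
    ext x
    constructor
    · rintro ⟨⟨x, hx⟩, hxU, rfl⟩
      exact ⟨by rwa [← hVU] at hxU, hx⟩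
    · rintro ⟨hxV, hxs⟩
      exact ⟨⟨x, hxs⟩, by rw [← hVU]; exact hxV, rfl⟩
  rw [himg]
  set g : EuclideanSpace ℝ (Fin d) → EuclideanSpace ℝ (Fin d) := fun y => ‖y‖⁻¹ • y with hg
  have hset : Ioo (0:ℝ) 1 • (V ∩ sphere (0 : EuclideanSpace ℝ (Fin d)) 1)
      = (({(0 : EuclideanSpace ℝ (Fin d))}ᶜ : Set _) ∩ g ⁻¹' V) ∩ ball 0 1 := by
    ext y
    constructor
    · rintro ⟨t, ht, x, ⟨hxV, hxs⟩, rfl⟩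
      have hx1 : ‖x‖ = 1 := mem_sphere_zero_iff_norm.1 hxs
      have ht0 : (0:ℝ) < t := ht.1
      have hnorm : ‖t • x‖ = t := by
        rw [norm_smul, hx1, mul_one, Real.norm_eq_abs, abs_of_pos ht0]
      refine ⟨⟨?_, ?_⟩, ?_⟩
      · simp only [mem_compl_iff, mem_singleton_iff]
        intro h
        rw [h, norm_zero] at hnorm
        exact ht0.ne hnorm
      · have : g (t • x) = x := by
          rw [hg]
          simp only [hnorm, smul_smul, inv_mul_cancel₀ ht0.ne', one_smul]
        simpa [this] using hxV
      · rw [mem_ball_zero_iff, hnorm]; exact ht.2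
    · rintro ⟨⟨hy0, hyV⟩, hyb⟩
      have hy0' : y ≠ 0 := hy0
      have hn : (0:ℝ) < ‖y‖ := norm_pos_iff.2 hy0'
      refine ⟨‖y‖, ⟨hn, mem_ball_zero_iff.1 hyb⟩, ‖y‖⁻¹ • y, ⟨hyV, ?_⟩, ?_⟩
      · rw [mem_sphere_zero_iff_norm, norm_smul, norm_inv, norm_norm,
          inv_mul_cancel₀ hn.ne']
      · show ‖y‖ • ‖y‖⁻¹ • y = y
        rw [smul_smul, mul_inv_cancel₀ hn.ne', one_smul]
  have hopen : IsOpen (Ioo (0:ℝ) 1 • (V ∩ sphere (0 : EuclideanSpace ℝ (Fin d)) 1)) := by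
    rw [hset]
    refine IsOpen.inter ?_ isOpen_ball
    refine ContinuousOn.isOpen_inter_preimage ?_ isOpen_compl_singleton hV
    exact (continuous_norm.continuousOn.inv₀
      (fun y hy => norm_ne_zero_iff.2 hy)).smul continuousOn_id
  have hnonempty : (Ioo (0:ℝ) 1 • (V ∩ sphere (0 : EuclideanSpace ℝ (Fin d)) 1)).Nonempty := by
    obtain ⟨x0, hx0⟩ := hne
    refine ⟨((1:ℝ)/2) • (x0 : EuclideanSpace ℝ (Fin d)), ?_⟩
    exact Set.smul_mem_smul (by constructor <;> norm_num)
      ⟨by rw [← hVU] at hx0; exact hx0, x0.2⟩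
  refine mul_ne_zero ?_ (hopen.measure_ne_zero volume hnonempty)
  simp only [ne_eq, Nat.cast_eq_zero]
  have : Module.finrank ℝ (EuclideanSpace ℝ (Fin d)) = d := finrank_euclideanSpace_fin
  omega

lemma aux_key (d : ℕ) (hd : 2 ≤ d) (r : ℝ) (hr : 0 < r) :
    ∀ (n : ℕ) (y : Fin n → EuclideanSpace ℝ (Fin d)), Function.Injective y →
      ∀ z : Fin n → ℂ,
        (∀ x ∈ sphere (0 : EuclideanSpace ℝ (Fin d)) 1,
          ∑ j, z j * Complex.exp (Complex.I * r * (inner ℝ x (y j) : ℝ)) = 0) →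
        z = 0 := by
  intro n
  induction n with
  | zero => intro y _ z _; funext j; exact j.elim0
  | succ n ih =>
    intro y hy z hyp
    haveI : Nonempty (Fin d) := ⟨⟨0, by omega⟩⟩
    haveI : Nontrivial (EuclideanSpace ℝ (Fin d)) := inferInstance
    -- a separating functional
    have hsep : ∃ f0 : EuclideanSpace ℝ (Fin d),
        f0 ≠ 0 ∧ Function.Injective (fun j => (inner ℝ f0 (y j) : ℝ)) := by
      set Dset : Set (EuclideanSpace ℝ (Fin d)) :=
        {0} ∪ ⋃ p : Fin (n + 1) × Fin (n + 1), ⋃ (_ : p.1 ≠ p.2),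
          (((ℝ ∙ (y p.1 - y p.2))ᗮ : Submodule ℝ (EuclideanSpace ℝ (Fin d)))
            : Set (EuclideanSpace ℝ (Fin d))) with hD
      have hDnull : volume Dset = 0 := by
        rw [hD]
        refine measure_union_null (measure_singleton 0) (measure_iUnion_null fun p =>
          measure_iUnion_null fun hp => ?_)
        refine Measure.addHaar_submodule _ _ ?_
        intro h
        rw [Submodule.orthogonal_eq_top_iff] at h
        have := Submodule.span_singleton_eq_bot.1 h
        exact hp (hy (sub_eq_zero.1 this))
      have hne : Dset ≠ univ := by
        intro h
        have h2 := isOpen_univ.measure_ne_zero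
          (volume : Measure (EuclideanSpace ℝ (Fin d))) univ_nonempty
        rw [← h] at h2
        exact h2 hDnull
      obtain ⟨f0, hf0⟩ := (ne_univ_iff_exists_notMem _).1 hne
      rw [hD] at hf0
      simp only [mem_union, mem_singleton_iff, mem_iUnion, not_or, not_exists,
        SetLike.mem_coe] at hf0
      refine ⟨f0, hf0.1, ?_⟩
      intro p q hpq
      by_contra hne'
      apply hf0.2 (p, q) hne'
      rw [Submodule.mem_orthogonal']
      intro u hu
      obtain ⟨c, rfl⟩ := Submodule.mem_span_singleton.1 hu
      rw [real_inner_smul_right, inner_sub_right]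
      simp only at hpq
      rw [hpq]; ring
    obtain ⟨e, f, henorm, hfnorm, hef, hbinj0⟩ :
        ∃ e f : EuclideanSpace ℝ (Fin d), ‖e‖ = 1 ∧ ‖f‖ = 1 ∧ (inner ℝ e f : ℝ) = 0 ∧
          Function.Injective (fun j => (inner ℝ f (y j) : ℝ)) := by
      obtain ⟨f0, hf00, hf0inj⟩ := hsep
      have hc0 : (0:ℝ) < ‖f0‖⁻¹ := inv_pos.2 (norm_pos_iff.2 hf00)
      set f : EuclideanSpace ℝ (Fin d) := ‖f0‖⁻¹ • f0 with hf
      have hfne : f ≠ 0 := smul_ne_zero hc0.ne' hf00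
      have hfnorm : ‖f‖ = 1 := by
        rw [hf, norm_smul, Real.norm_eq_abs, abs_of_pos hc0,
          inv_mul_cancel₀ (norm_pos_iff.2 hf00).ne']
      have hKne : ((ℝ ∙ f)ᗮ : Submodule ℝ (EuclideanSpace ℝ (Fin d))) ≠ ⊥ := by
        intro h
        have h2 : (ℝ ∙ f : Submodule ℝ (EuclideanSpace ℝ (Fin d))) = ⊤ := by
          have h3 := congrArg Submodule.orthogonal h
          rwa [Submodule.orthogonal_orthogonal, Submodule.bot_orthogonal_eq_top] at h3
        have h4 := finrank_span_singleton (K := ℝ) hfne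
        rw [h2, finrank_top] at h4
        rw [finrank_euclideanSpace_fin] at h4
        omega
      obtain ⟨v, hvK, hv0⟩ := Submodule.exists_mem_ne_zero_of_ne_bot hKne
      refine ⟨‖v‖⁻¹ • v, f, ?_, hfnorm, ?_, ?_⟩
      · rw [norm_smul, Real.norm_eq_abs, abs_of_pos (inv_pos.2 (norm_pos_iff.2 hv0)),
          inv_mul_cancel₀ (norm_pos_iff.2 hv0).ne']
      · have hv : (inner ℝ v f : ℝ) = 0 := by
          have h5 := (Submodule.mem_orthogonal _ v).1 hvK f (Submodule.mem_span_singleton_self f)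
          rwa [real_inner_comm] at h5
        rw [real_inner_smul_left, hv, mul_zero]
      · intro p q h
        apply hf0inj
        simp only [hf, real_inner_smul_left] at h
        exact mul_left_cancel₀ hc0.ne' h
    set a : Fin (n + 1) → ℝ := fun j => inner ℝ e (y j) with ha
    set b : Fin (n + 1) → ℝ := fun j => inner ℝ f (y j) with hb
    have hbinj : Function.Injective b := hbinj0
    -- values on the one-parameter circle
    have hval : ∀ t : ℝ, ∑ j, z j *
        Complex.exp (Complex.I * r * ((Real.cos t * a j + Real.sin t * b j : ℝ) : ℂ)) = 0 := by
      intro t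
      have h1 : ‖Real.cos t • e‖ = |Real.cos t| := by
        rw [norm_smul, Real.norm_eq_abs, henorm, mul_one]
      have h2 : ‖Real.sin t • f‖ = |Real.sin t| := by
        rw [norm_smul, Real.norm_eq_abs, hfnorm, mul_one]
      have h3 : (inner ℝ (Real.cos t • e) (Real.sin t • f) : ℝ) = 0 := by
        rw [real_inner_smul_left, real_inner_smul_right, hef]; ring
      have hmem : (Real.cos t • e + Real.sin t • f) ∈
          sphere (0 : EuclideanSpace ℝ (Fin d)) 1 := by
        rw [mem_sphere_zero_iff_norm]
        have hsq : ‖Real.cos t • e + Real.sin t • f‖ ^ 2 = 1 := by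
          rw [norm_add_sq_real, h1, h2, h3, _root_.sq_abs, _root_.sq_abs]
          linear_combination Real.sin_sq_add_cos_sq t
        have h4 : (‖Real.cos t • e + Real.sin t • f‖ - 1) *
            (‖Real.cos t • e + Real.sin t • f‖ + 1) = 0 := by linear_combination hsq
        rcases mul_eq_zero.1 h4 with h5 | h5
        · linarith
        · nlinarith [norm_nonneg (Real.cos t • e + Real.sin t • f)]
      have hinner : ∀ j, (inner ℝ (Real.cos t • e + Real.sin t • f) (y j) : ℝ)
          = Real.cos t * a j + Real.sin t * b j := by
        intro j
        rw [inner_add_left, real_inner_smul_left, real_inner_smul_left, ha, hb]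
      have h0 := hyp _ hmem
      rw [← h0]
      refine Finset.sum_congr rfl fun j _ => ?_
      rw [hinner j]
    -- the entire function
    set H : ℂ → ℂ := fun φ => ∑ j, z j *
      Complex.exp (Complex.I * r * ((a j : ℂ) * Complex.cos φ + (b j : ℂ) * Complex.sin φ))
      with hH
    have hdiff : Differentiable ℂ H := by
      refine Differentiable.fun_sum fun j _ => Differentiable.const_mul (Differentiable.cexp ?_) _
      exact (differentiable_const _).mul
        (((differentiable_const _).mul Complex.differentiable_cos).add
          ((differentiable_const _).mul Complex.differentiable_sin))
    have hHreal : ∀ t : ℝ, H ((t : ℝ) : ℂ) = 0 := by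
      intro t
      rw [hH]
      have h1 := hval t
      rw [← h1]
      refine Finset.sum_congr rfl fun j _ => ?_
      congr 2
      push_cast [← Complex.ofReal_cos, ← Complex.ofReal_sin]
      ring
    have hH0 : ∀ φ : ℂ, H φ = 0 := by
      have hA : AnalyticOnNhd ℂ H Set.univ := hdiff.differentiableOn.analyticOnNhd isOpen_univ
      have hfreq : ∃ᶠ w in nhdsWithin (0 : ℂ) {(0 : ℂ)}ᶜ, H w = 0 := by
        have htend : Filter.Tendsto (fun k : ℕ => ((1 / (k + 1 : ℝ) : ℝ) : ℂ))
            Filter.atTop (nhdsWithin (0 : ℂ) {(0 : ℂ)}ᶜ) := by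
          rw [tendsto_nhdsWithin_iff]
          constructor
          · have h2 := (Complex.continuous_ofReal.tendsto (0 : ℝ)).comp
              tendsto_one_div_add_atTop_nhds_zero_nat
            rw [Complex.ofReal_zero] at h2
            exact h2
          · refine Filter.Eventually.of_forall fun k => ?_
            simp only [Set.mem_compl_iff, Set.mem_singleton_iff]
            intro h
            have h5 : (1 / (k + 1 : ℝ)) = 0 := by exact_mod_cast h
            have h6 : (0:ℝ) < 1 / (k + 1 : ℝ) := by positivity
            rw [h5] at h6
            exact lt_irrefl _ h6
        exact htend.frequently (Filter.Frequently.of_forall fun k => hHreal _)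
      have h7 := hA.eqOn_zero_of_preconnected_of_frequently_eq_zero
        isPreconnected_univ (Set.mem_univ 0) hfreq
      exact fun φ => h7 (Set.mem_univ φ)
    -- evaluate on the imaginary axis
    set A : Fin (n + 1) → ℝ → ℂ := fun j s =>
      Complex.I * r * a j * Real.cosh s - r * b j * Real.sinh s with hA
    have hGs : ∀ s : ℝ, ∑ j, z j * Complex.exp (A j s) = 0 := by
      intro s
      have h1 := hH0 ((s : ℂ) * Complex.I)
      rw [hH] at h1
      rw [← h1]
      refine Finset.sum_congr rfl fun j _ => ?_
      congr 2
      rw [Complex.cos_mul_I, Complex.sin_mul_I, hA, ← Complex.ofReal_cosh, ← Complex.ofReal_sinh]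
      linear_combination (-(r : ℂ) * (b j : ℂ) * (Real.sinh s : ℂ)) * Complex.I_sq
    -- the minimizing index
    obtain ⟨j0, -, hj0⟩ := Finset.exists_min_image Finset.univ b ⟨0, Finset.mem_univ 0⟩
    have hzj0 : z j0 = 0 := by
      have hTzero : ∀ s : ℝ, ∑ j, z j * Complex.exp (A j s - A j0 s) = 0 := by
        intro s
        have h1 : ∀ j : Fin (n + 1), z j * Complex.exp (A j s - A j0 s)
            = (z j * Complex.exp (A j s)) * (Complex.exp (A j0 s))⁻¹ := by
          intro j
          rw [Complex.exp_sub, div_eq_mul_inv]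
          ring
        rw [Finset.sum_congr rfl fun j _ => h1 j, ← Finset.sum_mul, hGs s, zero_mul]
      have hsinh : Filter.Tendsto Real.sinh Filter.atTop Filter.atTop := by
        refine Filter.tendsto_atTop_mono' Filter.atTop ?_ Filter.tendsto_id
        filter_upwards [Filter.eventually_gt_atTop (0 : ℝ)] with x hx
        exact (Real.self_lt_sinh_iff.2 hx).le
      have hre : ∀ (j : Fin (n + 1)) (s : ℝ),
          (A j s - A j0 s).re = -(r * (b j - b j0)) * Real.sinh s := by
        intro j s
        simp only [hA, Complex.sub_re, Complex.mul_re, Complex.mul_im, Complex.I_re,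
          Complex.I_im, Complex.ofReal_re, Complex.ofReal_im]
        ring
      have key : ∀ j : Fin (n + 1), Filter.Tendsto
          (fun s : ℝ => z j * Complex.exp (A j s - A j0 s)) Filter.atTop
          (nhds (if j = j0 then z j0 else 0)) := by
        intro j
        by_cases h : j = j0
        · subst h
          simp only [sub_self, Complex.exp_zero, mul_one, if_true]
          exact tendsto_const_nhds
        · simp only [h, if_false]
          rw [tendsto_zero_iff_norm_tendsto_zero]
          have heq : ∀ s : ℝ, ‖z j * Complex.exp (A j s - A j0 s)‖
              = ‖z j‖ * Real.exp (-(r * (b j - b j0)) * Real.sinh s) := by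
            intro s
            rw [norm_mul, Complex.norm_exp, hre]
          refine Filter.Tendsto.congr (fun s => (heq s).symm) ?_
          have hblt : b j0 < b j :=
            lt_of_le_of_ne (hj0 j (Finset.mem_univ j)) fun hc => h (hbinj hc.symm)
          have hcneg : -(r * (b j - b j0)) < 0 := by nlinarith
          have h2 : Filter.Tendsto (fun s : ℝ =>
              Real.exp (-(r * (b j - b j0)) * Real.sinh s)) Filter.atTop (nhds 0) :=
            Real.tendsto_exp_atBot.comp (Filter.Tendsto.const_mul_atTop_of_neg hcneg hsinh)
          simpa using h2.const_mul ‖z j‖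
      have hsum := tendsto_finset_sum Finset.univ fun j _ => key j
      have hsum' : Filter.Tendsto (fun s : ℝ => ∑ j, z j * Complex.exp (A j s - A j0 s))
          Filter.atTop (nhds (z j0)) := by
        simpa [Finset.sum_ite_eq', Finset.mem_univ] using hsum
      have h3 := (Filter.tendsto_congr hTzero).1 hsum'
      exact tendsto_nhds_unique h3 tendsto_const_nhds
    -- induction for the remaining indices
    have hrest : ∀ j : Fin n, z (j0.succAbove j) = 0 := by
      have happ := ih (y ∘ j0.succAbove) (hy.comp Fin.succAbove_right_injective)
        (z ∘ j0.succAbove) ?_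
      · intro j
        have := congrFun happ j
        simpa using this
      · intro x hx
        have h0 := hyp x hx
        rw [Fin.sum_univ_succAbove _ j0, hzj0, zero_mul, zero_add] at h0
        exact h0
    funext j
    simp only [Pi.zero_apply]
    by_cases h : j = j0
    · rw [h]; exact hzj0
    · obtain ⟨i, rfl⟩ := Fin.exists_succAbove_eq h
      exact hrest i


/-- For `d ≥ 2`, `r > 0` and pairwise distinct `y 1, …, y n ∈ ℝ^d`, the functions
`θ ↦ exp(i r θ·y j)` are linearly independent in `L²(S^{d-1})`: a linear combination
vanishing almost everywhere on the sphere has zero coefficients. In particular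
(case `n = 2`) two such functions associated to distinct points are linearly
independent. -/
theorem sphere_exponentials_linear_independent
    (d : ℕ) (hd : 2 ≤ d) (r : ℝ) (hr : 0 < r) :
    (∀ y y' : EuclideanSpace ℝ (Fin d), y ≠ y' →
      ∀ a b : ℂ,
        (∀ᵐ θ : Metric.sphere (0 : EuclideanSpace ℝ (Fin d)) 1
            ∂((volume : Measure (EuclideanSpace ℝ (Fin d))).toSphere),
          a * Complex.exp (Complex.I * r * (inner ℝ (θ : EuclideanSpace ℝ (Fin d)) y : ℝ)) +
          b * Complex.exp (Complex.I * r * (inner ℝ (θ : EuclideanSpace ℝ (Fin d)) y' : ℝ)) = 0) →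
        a = 0 ∧ b = 0) ∧
    ∀ (n : ℕ) (y : Fin n → EuclideanSpace ℝ (Fin d)), Function.Injective y →
      ∀ z : Fin n → ℂ,
        (∀ᵐ θ : Metric.sphere (0 : EuclideanSpace ℝ (Fin d)) 1
            ∂((volume : Measure (EuclideanSpace ℝ (Fin d))).toSphere),
          ∑ j, z j *
            Complex.exp (Complex.I * r * (inner ℝ (θ : EuclideanSpace ℝ (Fin d)) (y j) : ℝ)) = 0) →
        z = 0 := by
  haveI := aux_toSphere_pos d (by omega)
  have main2 : ∀ (n : ℕ) (y : Fin n → EuclideanSpace ℝ (Fin d)), Function.Injective y →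
      ∀ z : Fin n → ℂ,
        (∀ᵐ θ : Metric.sphere (0 : EuclideanSpace ℝ (Fin d)) 1
            ∂((volume : Measure (EuclideanSpace ℝ (Fin d))).toSphere),
          ∑ j, z j *
            Complex.exp (Complex.I * r * (inner ℝ (θ : EuclideanSpace ℝ (Fin d)) (y j) : ℝ)) = 0) →
        z = 0 := by
    intro n y hy z hae
    set F : Metric.sphere (0 : EuclideanSpace ℝ (Fin d)) 1 → ℂ := fun θ => ∑ j, z j *
      Complex.exp (Complex.I * r * (inner ℝ (θ : EuclideanSpace ℝ (Fin d)) (y j) : ℝ)) with hF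
    have hFcont : Continuous F := by
      refine continuous_finset_sum _ fun j _ => Continuous.mul continuous_const ?_
      refine Complex.continuous_exp.comp (Continuous.mul continuous_const ?_)
      exact Complex.continuous_ofReal.comp
        (Continuous.inner continuous_subtype_val continuous_const)
    have hae' : F =ᵐ[(volume : Measure (EuclideanSpace ℝ (Fin d))).toSphere]
        (fun _ => (0 : ℂ)) := by
      filter_upwards [hae] with θ hθ
      exact hθ
    have hFzero : F = fun _ => 0 :=
      Measure.eq_of_ae_eq hae' hFcont continuous_const
    refine aux_key d hd r hr n y hy z fun x hx => ?_
    have := congrFun hFzero ⟨x, hx⟩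
    simpa [hF] using this
  refine ⟨?_, main2⟩
  intro y y' hne a b hae
  have hY : Function.Injective ![y, y'] := by
    intro i j h
    fin_cases i <;> fin_cases j <;> simp_all
  have hZ := main2 2 ![y, y'] hY ![a, b] ?_
  · constructor
    · have := congrFun hZ 0
      simpa using this
    · have := congrFun hZ 1
      simpa using this
  · filter_upwards [hae] with θ hθ
    rw [Fin.sum_univ_two]
    simpa using hθ
end
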